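/- Let v be a monotone subadditive set function on a finite set A with v(∅)=0. Let S ⊆ A and let k be a positive integer such that v(S) ≥ k·v({i}) for every i ∈ S. If S is partitioned uniformly at random into two groups T₁ and T₂ (each element independently placed into T₁ with probability 1/2, else into T₂), then with probability at least 1/2, both v(T₁) ≥ ((k-1)/(4k))·v(S) and v(T₂) ≥ ((k-1)/(4k))·v(S). -/

import Mathlib

open Finset
open scoped Classical

/-- If the `A`-side already has value `≥ β` and the remaining pool `R` has value
`≥ 2β`, then at least half of the ways to split `R` make both sides `≥ β`. -/
lemma flip_a {A : Type*} [DecidableEq A] (v : Finset A → ℝ)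
    (hmono : ∀ S T : Finset A, S ⊆ T → v S ≤ v T)
    (hsub : ∀ S T : Finset A, v (S ∪ T) ≤ v S + v T)
    (β : ℝ) (Pa Pb R : Finset A)
    (hA : β ≤ v Pa) (hR : 2 * β ≤ v R) :
    2 ^ R.card ≤ 2 * ((R.powerset.filter
      (fun T => β ≤ v (Pa ∪ T) ∧ β ≤ v (Pb ∪ (R \ T)))).card) := by
  have hsplit : (R.powerset.filter
        (fun T => β ≤ v (Pa ∪ T) ∧ β ≤ v (Pb ∪ (R \ T)))).card
      + (R.powerset.filter
        (fun T => ¬ (β ≤ v (Pa ∪ T) ∧ β ≤ v (Pb ∪ (R \ T))))).card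
      = 2 ^ R.card := by
    rw [Finset.card_filter_add_card_filter_not, Finset.card_powerset]
  have hinj : (R.powerset.filter
        (fun T => ¬ (β ≤ v (Pa ∪ T) ∧ β ≤ v (Pb ∪ (R \ T))))).card
      ≤ (R.powerset.filter
        (fun T => β ≤ v (Pa ∪ T) ∧ β ≤ v (Pb ∪ (R \ T)))).card := by
    apply Finset.card_le_card_of_injOn (fun T => R \ T)
    · intro T hT
      simp only [Finset.coe_filter, Set.mem_setOf_eq, Finset.mem_filter, Finset.mem_powerset] at hT ⊢
      obtain ⟨hTR, hbad⟩ := hT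
      have h1 : β ≤ v (Pa ∪ T) := le_trans hA (hmono _ _ Finset.subset_union_left)
      have hb : v (Pb ∪ (R \ T)) < β := by
        by_contra h
        exact hbad ⟨h1, le_of_not_gt h⟩
      refine ⟨Finset.sdiff_subset, le_trans hA (hmono _ _ Finset.subset_union_left), ?_⟩
      rw [Finset.sdiff_sdiff_eq_self hTR]
      have h2 : v R ≤ v T + v (R \ T) := by
        have := hsub T (R \ T)
        rwa [Finset.union_sdiff_of_subset hTR] at this
      have h3 : v (R \ T) ≤ v (Pb ∪ (R \ T)) := hmono _ _ Finset.subset_union_right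
      have h4 : v T ≤ v (Pb ∪ T) := hmono _ _ Finset.subset_union_right
      linarith
    · intro T1 h1 T2 h2 h12
      simp only [Finset.coe_filter, Set.mem_setOf_eq, Finset.mem_powerset] at h1 h2
      have := congrArg (fun X => R \ X) h12
      simpa [Finset.sdiff_sdiff_eq_self h1.1, Finset.sdiff_sdiff_eq_self h2.1] using this
  omega

/-- Symmetric version: the `B`-side already crossed. -/
lemma flip_b {A : Type*} [DecidableEq A] (v : Finset A → ℝ)
    (hmono : ∀ S T : Finset A, S ⊆ T → v S ≤ v T)
    (hsub : ∀ S T : Finset A, v (S ∪ T) ≤ v S + v T)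
    (β : ℝ) (Pa Pb R : Finset A)
    (hB : β ≤ v Pb) (hR : 2 * β ≤ v R) :
    2 ^ R.card ≤ 2 * ((R.powerset.filter
      (fun T => β ≤ v (Pa ∪ T) ∧ β ≤ v (Pb ∪ (R \ T)))).card) := by
  have hsplit : (R.powerset.filter
        (fun T => β ≤ v (Pa ∪ T) ∧ β ≤ v (Pb ∪ (R \ T)))).card
      + (R.powerset.filter
        (fun T => ¬ (β ≤ v (Pa ∪ T) ∧ β ≤ v (Pb ∪ (R \ T))))).card
      = 2 ^ R.card := by
    rw [Finset.card_filter_add_card_filter_not, Finset.card_powerset]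
  have hinj : (R.powerset.filter
        (fun T => ¬ (β ≤ v (Pa ∪ T) ∧ β ≤ v (Pb ∪ (R \ T))))).card
      ≤ (R.powerset.filter
        (fun T => β ≤ v (Pa ∪ T) ∧ β ≤ v (Pb ∪ (R \ T)))).card := by
    apply Finset.card_le_card_of_injOn (fun T => R \ T)
    · intro T hT
      simp only [Finset.coe_filter, Set.mem_setOf_eq, Finset.mem_filter, Finset.mem_powerset] at hT ⊢
      obtain ⟨hTR, hbad⟩ := hT
      have h1 : β ≤ v (Pb ∪ (R \ T)) := le_trans hB (hmono _ _ Finset.subset_union_left)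
      have hb : v (Pa ∪ T) < β := by
        by_contra h
        exact hbad ⟨le_of_not_gt h, h1⟩
      refine ⟨Finset.sdiff_subset, ?_, ?_⟩
      · have h2 : v R ≤ v T + v (R \ T) := by
          have := hsub T (R \ T)
          rwa [Finset.union_sdiff_of_subset hTR] at this
        have h3 : v T ≤ v (Pa ∪ T) := hmono _ _ Finset.subset_union_right
        have h4 : v (R \ T) ≤ v (Pa ∪ (R \ T)) := hmono _ _ Finset.subset_union_right
        linarith
      · rw [Finset.sdiff_sdiff_eq_self hTR]
        exact le_trans hB (hmono _ _ Finset.subset_union_left)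
    · intro T1 h1 T2 h2 h12
      simp only [Finset.coe_filter, Set.mem_setOf_eq, Finset.mem_powerset] at h1 h2
      have := congrArg (fun X => R \ X) h12
      simpa [Finset.sdiff_sdiff_eq_self h1.1, Finset.sdiff_sdiff_eq_self h2.1] using this
  omega

/-- Main induction over the list of yet-unassigned elements. -/
lemma ind_lemma {A : Type*} [DecidableEq A] (v : Finset A → ℝ)
    (hmono : ∀ S T : Finset A, S ⊆ T → v S ≤ v T)
    (hsub : ∀ S T : Finset A, v (S ∪ T) ≤ v S + v T)
    (S : Finset A) (β c : ℝ) (hc : 0 < c) (hβ0 : 0 ≤ β)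
    (hβ4 : 4 * β + c ≤ v S)
    (hsmall : ∀ i ∈ S, v {i} ≤ c) :
    ∀ (L : List A) (Pa Pb : Finset A), L.Nodup →
      Pa ∪ Pb ∪ L.toFinset = S → (∀ i ∈ L, i ∈ S) →
      v Pa < β → v Pb < β →
      2 ^ L.length ≤ 2 * ((L.toFinset.powerset.filter
        (fun T => β ≤ v (Pa ∪ T) ∧ β ≤ v (Pb ∪ (L.toFinset \ T)))).card) := by
  intro L
  induction L with
  | nil =>
    intro Pa Pb _ hunion _ ha hb
    exfalso
    simp only [List.toFinset_nil, Finset.union_empty] at hunion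
    have h1 : v S ≤ v Pa + v Pb := by
      rw [← hunion]; exact hsub Pa Pb
    linarith
  | cons i t IH =>
    intro Pa Pb hnd hunion hmem ha hb
    have hndt : t.Nodup := (List.nodup_cons.mp hnd).2
    have hit : i ∉ t.toFinset := by
      simp only [List.mem_toFinset]
      exact (List.nodup_cons.mp hnd).1
    have hiS : i ∈ S := hmem i (List.mem_cons_self)
    have hLt : (i :: t).toFinset = insert i t.toFinset := List.toFinset_cons
    have hsetA : insert i Pa ∪ Pb ∪ t.toFinset = S := by
      rw [← hunion, hLt]; ext x
      simp only [Finset.mem_union, Finset.mem_insert]; tauto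
    have hsetB : Pa ∪ insert i Pb ∪ t.toFinset = S := by
      rw [← hunion, hLt]; ext x
      simp only [Finset.mem_union, Finset.mem_insert]; tauto
    have hcardT : t.toFinset.card = t.length := List.toFinset_card_of_nodup hndt
    have hmemt : ∀ j ∈ t, j ∈ S := fun j hj => hmem j (List.mem_cons_of_mem i hj)
    have hiv : v {i} ≤ c := hsmall i hiS
    have hins_le : ∀ P : Finset A, v (insert i P) ≤ v {i} + v P := by
      intro P
      have := hsub {i} P
      rwa [← Finset.insert_eq] at this
    -- bound branch A (i goes to side a)
    have hbA : 2 ^ t.length ≤ 2 * (t.toFinset.powerset.filter (fun T =>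
        β ≤ v (insert i Pa ∪ T) ∧ β ≤ v (Pb ∪ (t.toFinset \ T)))).card := by
      by_cases hcross : v (insert i Pa) < β
      · exact IH (insert i Pa) Pb hndt hsetA hmemt hcross hb
      · push_neg at hcross
        have hR : 2 * β ≤ v t.toFinset := by
          have h1 : v S ≤ v (insert i Pa) + v Pb + v t.toFinset := by
            calc v S = v (insert i Pa ∪ Pb ∪ t.toFinset) := by rw [hsetA]
            _ ≤ v (insert i Pa ∪ Pb) + v t.toFinset := hsub _ _
            _ ≤ v (insert i Pa) + v Pb + v t.toFinset := by
                have := hsub (insert i Pa) Pb; linarith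
          have h2 : v (insert i Pa) ≤ v Pa + c := by
            have := hins_le Pa; linarith
          linarith
        have := flip_a v hmono hsub β (insert i Pa) Pb t.toFinset hcross hR
        rwa [hcardT] at this
    -- bound branch B (i goes to side b)
    have hbB : 2 ^ t.length ≤ 2 * (t.toFinset.powerset.filter (fun T =>
        β ≤ v (Pa ∪ T) ∧ β ≤ v (insert i Pb ∪ (t.toFinset \ T)))).card := by
      by_cases hcross : v (insert i Pb) < β
      · exact IH Pa (insert i Pb) hndt hsetB hmemt ha hcross
      · push_neg at hcross
        have hR : 2 * β ≤ v t.toFinset := by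
          have h1 : v S ≤ v Pa + v (insert i Pb) + v t.toFinset := by
            calc v S = v (Pa ∪ insert i Pb ∪ t.toFinset) := by rw [hsetB]
            _ ≤ v (Pa ∪ insert i Pb) + v t.toFinset := hsub _ _
            _ ≤ v Pa + v (insert i Pb) + v t.toFinset := by
                have := hsub Pa (insert i Pb); linarith
          have h2 : v (insert i Pb) ≤ v Pb + c := by
            have := hins_le Pb; linarith
          linarith
        have := flip_b v hmono hsub β Pa (insert i Pb) t.toFinset hcross hR
        rwa [hcardT] at this
    -- now split the count for `insert i t.toFinset`
    simp only [hLt, List.length_cons]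
    rw [Finset.powerset_insert, Finset.filter_union]
    have hdisj : Disjoint (t.toFinset.powerset.filter (fun T =>
          β ≤ v (Pa ∪ T) ∧ β ≤ v (Pb ∪ (insert i t.toFinset \ T))))
        ((t.toFinset.powerset.image (insert i)).filter (fun T =>
          β ≤ v (Pa ∪ T) ∧ β ≤ v (Pb ∪ (insert i t.toFinset \ T)))) := by
      apply Finset.disjoint_filter_filter
      rw [Finset.disjoint_left]
      intro T hT hT'
      rw [Finset.mem_powerset] at hT
      rw [Finset.mem_image] at hT'
      obtain ⟨T', _, hT'eq⟩ := hT'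
      have : i ∈ T := by rw [← hT'eq]; exact Finset.mem_insert_self i T'
      exact hit (hT this)
    rw [Finset.card_union_of_disjoint hdisj]
    -- identify the first count with branch B
    have hcount0 : (t.toFinset.powerset.filter (fun T =>
          β ≤ v (Pa ∪ T) ∧ β ≤ v (Pb ∪ (insert i t.toFinset \ T)))).card
        = (t.toFinset.powerset.filter (fun T =>
            β ≤ v (Pa ∪ T) ∧ β ≤ v (insert i Pb ∪ (t.toFinset \ T)))).card := by
      congr 1
      apply Finset.filter_congr
      intro T hT
      rw [Finset.mem_powerset] at hT
      have hiT : i ∉ T := fun h => hit (hT h)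
      have e1 : insert i t.toFinset \ T = insert i (t.toFinset \ T) := by
        ext x
        simp only [Finset.mem_sdiff, Finset.mem_insert]
        constructor
        · rintro ⟨h1 | h1, h2⟩
          · exact Or.inl h1
          · exact Or.inr ⟨h1, h2⟩
        · rintro (h1 | ⟨h1, h2⟩)
          · exact ⟨Or.inl h1, by rwa [h1]⟩
          · exact ⟨Or.inr h1, h2⟩
      have e2 : Pb ∪ insert i (t.toFinset \ T) = insert i Pb ∪ (t.toFinset \ T) := by
        rw [Finset.union_insert, Finset.insert_union]
      rw [e1, e2]
    -- identify the second count with branch A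
    have hinjins : Set.InjOn (insert i) (↑t.toFinset.powerset : Set (Finset A)) := by
      intro T1 h1 T2 h2 h12
      rw [Finset.mem_coe, Finset.mem_powerset] at h1 h2
      have k1 : i ∉ T1 := fun h => hit (h1 h)
      have k2 : i ∉ T2 := fun h => hit (h2 h)
      rw [← Finset.erase_insert k1, ← Finset.erase_insert k2, h12]
    have hcount1 : ((t.toFinset.powerset.image (insert i)).filter (fun T =>
          β ≤ v (Pa ∪ T) ∧ β ≤ v (Pb ∪ (insert i t.toFinset \ T)))).card
        = (t.toFinset.powerset.filter (fun T =>
            β ≤ v (insert i Pa ∪ T) ∧ β ≤ v (Pb ∪ (t.toFinset \ T)))).card := by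
      rw [Finset.filter_image]
      rw [Finset.card_image_of_injOn (hinjins.mono (by
        intro x hx
        simp only [Finset.coe_filter, Set.mem_setOf_eq] at hx
        exact Finset.mem_coe.mpr hx.1))]
      congr 1
      apply Finset.filter_congr
      intro T hT
      rw [Finset.mem_powerset] at hT
      have hiT : i ∉ T := fun h => hit (hT h)
      have e1 : Pa ∪ insert i T = insert i Pa ∪ T := by
        rw [Finset.union_insert, Finset.insert_union]
      have e2 : insert i t.toFinset \ insert i T = t.toFinset \ T := by
        ext x
        simp only [Finset.mem_sdiff, Finset.mem_insert]
        constructor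
        · rintro ⟨h1 | h1, h2⟩
          · exact absurd (Or.inl h1) h2
          · exact ⟨h1, fun h => h2 (Or.inr h)⟩
        · rintro ⟨h1, h2⟩
          refine ⟨Or.inr h1, ?_⟩
          rintro (h3 | h3)
          · exact hit (h3 ▸ h1)
          · exact h2 h3
      rw [e1, e2]
    rw [hcount0, hcount1, pow_succ]
    omega

theorem random_partition_lemma {A : Type*} [Fintype A] [DecidableEq A]
    (v : Finset A → ℝ)
    (hmono : ∀ S T : Finset A, S ⊆ T → v S ≤ v T)
    (hsub : ∀ S T : Finset A, v (S ∪ T) ≤ v S + v T)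
    (hempty : v ∅ = 0)
    (S : Finset A) (k : ℕ) (hk : 0 < k)
    (hks : ∀ i ∈ S, (k : ℝ) * v {i} ≤ v S) :
    (1 : ℝ) / 2 ≤
      ((S.powerset.filter (fun T₁ =>
          ((k : ℝ) - 1) / (4 * k) * v S ≤ v T₁ ∧
          ((k : ℝ) - 1) / (4 * k) * v S ≤ v (S \ T₁))).card : ℝ) / 2 ^ S.card := by
  have hvnonneg : ∀ T : Finset A, 0 ≤ v T := by
    intro T
    have := hmono ∅ T (Finset.empty_subset T)
    rwa [hempty] at this
  have hkR : (0 : ℝ) < k := by exact_mod_cast hk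
  have key : 2 ^ S.card ≤ 2 * (S.powerset.filter (fun T₁ =>
      ((k : ℝ) - 1) / (4 * k) * v S ≤ v T₁ ∧
      ((k : ℝ) - 1) / (4 * k) * v S ≤ v (S \ T₁))).card := by
    by_cases htriv : ((k : ℝ) - 1) / (4 * k) * v S ≤ 0
    · have : S.powerset.filter (fun T₁ =>
          ((k : ℝ) - 1) / (4 * k) * v S ≤ v T₁ ∧
          ((k : ℝ) - 1) / (4 * k) * v S ≤ v (S \ T₁)) = S.powerset := by
        apply Finset.filter_true_of_mem
        intro T hT
        exact ⟨le_trans htriv (hvnonneg T), le_trans htriv (hvnonneg _)⟩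
      rw [this, Finset.card_powerset]
      omega
    · push_neg at htriv
      have hfac : 0 ≤ ((k : ℝ) - 1) / (4 * k) := by
        apply div_nonneg
        · have : (1 : ℝ) ≤ k := by exact_mod_cast hk
          linarith
        · linarith
      have hvS : 0 < v S := by
        by_contra h
        push_neg at h
        nlinarith
      have hc : 0 < v S / k := div_pos hvS hkR
      have hβ4 : 4 * (((k : ℝ) - 1) / (4 * k) * v S) + v S / k ≤ v S := by
        have hk0 : (k : ℝ) ≠ 0 := ne_of_gt hkR
        have : 4 * (((k : ℝ) - 1) / (4 * k) * v S) + v S / k = v S := by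
          field_simp
          ring
        linarith [this.le]
      have hβ0 : (0 : ℝ) ≤ ((k : ℝ) - 1) / (4 * k) * v S := le_of_lt htriv
      have hsmall : ∀ i ∈ S, v {i} ≤ v S / k := by
        intro i hi
        rw [le_div_iff₀ hkR]
        have := hks i hi
        linarith
      have hbase := ind_lemma v hmono hsub S (((k : ℝ) - 1) / (4 * k) * v S) (v S / k)
        hc hβ0 hβ4 hsmall
        S.toList ∅ ∅ S.nodup_toList
        (by simp [Finset.toList_toFinset]) (by intro i hi; rwa [Finset.mem_toList] at hi)
        (by rw [hempty]; exact htriv) (by rw [hempty]; exact htriv)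
      have heq : (S.toList.toFinset.powerset.filter
          (fun T => ((k : ℝ) - 1) / (4 * k) * v S ≤ v (∅ ∪ T) ∧
            ((k : ℝ) - 1) / (4 * k) * v S ≤ v (∅ ∪ (S.toList.toFinset \ T)))).card
          = (S.powerset.filter (fun T₁ =>
              ((k : ℝ) - 1) / (4 * k) * v S ≤ v T₁ ∧
              ((k : ℝ) - 1) / (4 * k) * v S ≤ v (S \ T₁))).card := by
        congr 1
        rw [Finset.toList_toFinset]
        apply Finset.filter_congr
        intro T hT
        simp only [Finset.empty_union]
      rw [heq] at hbase
      rwa [Finset.length_toList] at hbase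
  have hpow : (0 : ℝ) < 2 ^ S.card := by positivity
  rw [le_div_iff₀ hpow]
  have h2 : ((2 : ℝ)) ^ S.card ≤ 2 * ((S.powerset.filter (fun T₁ =>
      ((k : ℝ) - 1) / (4 * k) * v S ≤ v T₁ ∧
      ((k : ℝ) - 1) / (4 * k) * v S ≤ v (S \ T₁))).card : ℝ) := by
    exact_mod_cast key
  linarith
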